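/- arXiv:2604.16282 — 3 statements merged into one kernel-verified Lean document; each statement's English description precedes it below -/
import Mathlib

section
/- Let f(X) = X (X^T X)^{-1} X^T denote the orthogonal projection onto the column space of a full-column-rank matrix X ∈ R^{D×d}. If X and Y both have smallest singular value at least s > 0, then ‖f(X) − f(Y)‖_F ≤ (√2 / s) ‖X − Y‖_F. -/
open MeasureTheory Filter Topology Matrix

noncomputable def frobSq {m n : ℕ} (A : Matrix (Fin m) (Fin n) ℝ) : ℝ :=
  ∑ i, ∑ j, A i j ^ 2

noncomputable def frob {m n : ℕ} (A : Matrix (Fin m) (Fin n) ℝ) : ℝ :=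
  Real.sqrt (frobSq A)

noncomputable def frobInner {m n : ℕ} (A B : Matrix (Fin m) (Fin n) ℝ) : ℝ :=
  ∑ i, ∑ j, A i j * B i j

noncomputable def evnorm {n : ℕ} (v : Fin n → ℝ) : ℝ :=
  Real.sqrt (∑ i, v i ^ 2)

noncomputable def sigmaMin {m n : ℕ} (A : Matrix (Fin m) (Fin n) ℝ) : ℝ :=
  sInf {r : ℝ | ∃ v : Fin n → ℝ, evnorm v = 1 ∧ r = evnorm (A.mulVec v)}

noncomputable def sigmaMax {m n : ℕ} (A : Matrix (Fin m) (Fin n) ℝ) : ℝ :=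
  sSup {r : ℝ | ∃ v : Fin n → ℝ, evnorm v = 1 ∧ r = evnorm (A.mulVec v)}

noncomputable def proj {m n : ℕ} (X : Matrix (Fin m) (Fin n) ℝ) : Matrix (Fin m) (Fin m) ℝ :=
  X * (Xᵀ * X)⁻¹ * Xᵀ

noncomputable def jac {n m : ℕ} (f : (Fin n → ℝ) → (Fin m → ℝ)) (z : Fin n → ℝ) :
    Matrix (Fin m) (Fin n) ℝ :=
  Matrix.of fun i j => fderiv ℝ f z (Pi.single j 1) i

noncomputable def hess {n : ℕ} (f : (Fin n → ℝ) → ℝ) (z : Fin n → ℝ) :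
    Matrix (Fin n) (Fin n) ℝ :=
  Matrix.of fun k l => fderiv ℝ (fun x => fderiv ℝ f x (Pi.single l 1)) z (Pi.single k 1)

noncomputable def rho {d D : ℕ} (Ω : Set (Fin d → ℝ)) (φ ψ : (Fin d → ℝ) → (Fin D → ℝ)) : ℝ :=
  Real.sqrt (∫ z in Ω,
    (evnorm (φ z - ψ z) ^ 2 + (1/2) * frobSq (proj (jac φ z) - proj (jac ψ z))))

/-! ### Auxiliary lemmas -/

lemma frobSq_nonneg {m n : ℕ} (A : Matrix (Fin m) (Fin n) ℝ) : 0 ≤ frobSq A :=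
  Finset.sum_nonneg fun _ _ => Finset.sum_nonneg fun _ _ => sq_nonneg _

lemma frobInner_self {m n : ℕ} (A : Matrix (Fin m) (Fin n) ℝ) : frobInner A A = frobSq A := by
  simp [frobInner, frobSq, sq]

lemma frobInner_eq_trace {m n : ℕ} (A B : Matrix (Fin m) (Fin n) ℝ) :
    frobInner A B = Matrix.trace (Aᵀ * B) := by
  rw [frobInner, Matrix.trace, Finset.sum_comm]
  simp [Matrix.mul_apply, Matrix.diag]

lemma frobSq_sub {m n : ℕ} (A B : Matrix (Fin m) (Fin n) ℝ) :
    frobSq (A - B) = frobSq A - 2 * frobInner A B + frobSq B := by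
  simp only [frobSq, frobInner, Matrix.sub_apply]
  rw [Finset.mul_sum, ← Finset.sum_sub_distrib, ← Finset.sum_add_distrib]
  refine Finset.sum_congr rfl fun i _ => ?_
  rw [Finset.mul_sum, ← Finset.sum_sub_distrib, ← Finset.sum_add_distrib]
  exact Finset.sum_congr rfl fun j _ => by ring

lemma frobSq_transpose {m n : ℕ} (A : Matrix (Fin m) (Fin n) ℝ) : frobSq Aᵀ = frobSq A := by
  simp only [frobSq, Matrix.transpose_apply]
  rw [Finset.sum_comm]

lemma frobSq_sub_comm {m n : ℕ} (A B : Matrix (Fin m) (Fin n) ℝ) :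
    frobSq (A - B) = frobSq (B - A) := by
  simp only [frobSq, Matrix.sub_apply]
  exact Finset.sum_congr rfl fun i _ => Finset.sum_congr rfl fun j _ => by ring

lemma frobSq_contract {m k : ℕ} (R : Matrix (Fin m) (Fin m) ℝ) (hsym : Rᵀ = R)
    (hidem : R * R = R) (N : Matrix (Fin m) (Fin k) ℝ) :
    frobSq ((1 - R) * N) ≤ frobSq N := by
  have h1 : (1 - R) * N = N - R * N := by rw [Matrix.sub_mul, Matrix.one_mul]
  have h2 : (R * N)ᵀ * (R * N) = Nᵀ * (R * N) := by
    rw [Matrix.transpose_mul, hsym, Matrix.mul_assoc, ← Matrix.mul_assoc R R N, hidem]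
  have h3 : frobInner N (R * N) = frobSq (R * N) := by
    rw [frobInner_eq_trace, ← frobInner_self, frobInner_eq_trace, h2]
  have h4 := frobSq_nonneg (R * N)
  rw [h1, frobSq_sub, h3]
  linarith

lemma sv_sq_lower {D d : ℕ} {s : ℝ} (hs : 0 < s) (X : Matrix (Fin D) (Fin d) ℝ)
    (hX : s ≤ sigmaMin X) (v : Fin d → ℝ) :
    s ^ 2 * (∑ i, v i ^ 2) ≤ ∑ j, (X.mulVec v) j ^ 2 := by
  by_cases hv : v = 0
  · simp [hv]
  · have hv2 : 0 < ∑ i, v i ^ 2 := by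
      obtain ⟨i, hi⟩ : ∃ i, v i ≠ 0 := by
        by_contra h; push_neg at h; exact hv (funext h)
      exact Finset.sum_pos' (fun j _ => sq_nonneg _) ⟨i, Finset.mem_univ i, by positivity⟩
    set nv : ℝ := Real.sqrt (∑ i, v i ^ 2) with hn
    have hnpos : 0 < nv := Real.sqrt_pos.mpr hv2
    have hscale : ∀ {k : ℕ} (c : ℝ) (w : Fin k → ℝ),
        ∑ i, (c • w) i ^ 2 = c ^ 2 * ∑ i, w i ^ 2 := by
      intro k c w
      rw [Finset.mul_sum]
      exact Finset.sum_congr rfl fun i _ => by simp [Pi.smul_apply]; ring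
    have hunit : evnorm (nv⁻¹ • v) = 1 := by
      rw [evnorm, hscale, Real.sqrt_mul (by positivity), Real.sqrt_sq (by positivity), ← hn]
      field_simp
    have hbdd : BddBelow {r : ℝ | ∃ u : Fin d → ℝ, evnorm u = 1 ∧ r = evnorm (X.mulVec u)} := by
      refine ⟨0, fun r hr => ?_⟩
      obtain ⟨u, -, hr⟩ := hr
      rw [hr]; exact Real.sqrt_nonneg _
    have hle : s ≤ evnorm (X.mulVec (nv⁻¹ • v)) :=
      le_trans hX (csInf_le hbdd ⟨nv⁻¹ • v, hunit, rfl⟩)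
    rw [Matrix.mulVec_smul] at hle
    rw [evnorm, hscale, Real.sqrt_mul (by positivity), Real.sqrt_sq (by positivity)] at hle
    have hsn : s * nv ≤ Real.sqrt (∑ j, (X.mulVec v) j ^ 2) := by
      calc s * nv ≤ (nv⁻¹ * Real.sqrt (∑ j, (X.mulVec v) j ^ 2)) * nv :=
            mul_le_mul_of_nonneg_right hle hnpos.le
        _ = Real.sqrt (∑ j, (X.mulVec v) j ^ 2) := by field_simp
    have hq := mul_self_le_mul_self (by positivity : (0:ℝ) ≤ s * nv) hsn
    rw [Real.mul_self_sqrt (Finset.sum_nonneg fun _ _ => sq_nonneg _)] at hq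
    have hnv2 : nv * nv = ∑ i, v i ^ 2 := Real.mul_self_sqrt hv2.le
    nlinarith [hq, hnv2]

lemma gram_dot {D d : ℕ} (X : Matrix (Fin D) (Fin d) ℝ) (u w : Fin d → ℝ) :
    u ⬝ᵥ ((Xᵀ * X) *ᵥ w) = (X *ᵥ u) ⬝ᵥ (X *ᵥ w) := by
  rw [← Matrix.mulVec_mulVec, Matrix.dotProduct_mulVec, Matrix.vecMul_transpose]

lemma gram_det_isUnit {D d : ℕ} {s : ℝ} (hs : 0 < s) (X : Matrix (Fin D) (Fin d) ℝ)
    (hX : s ≤ sigmaMin X) : IsUnit (Xᵀ * X).det := by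
  rw [isUnit_iff_ne_zero]
  intro hdet
  obtain ⟨v, hv0, hv⟩ := Matrix.exists_mulVec_eq_zero_iff.mpr hdet
  have h1 : (X *ᵥ v) ⬝ᵥ (X *ᵥ v) = 0 := by rw [← gram_dot, hv, dotProduct_zero]
  have h2 : ∑ j, (X.mulVec v) j ^ 2 = 0 := by
    rw [← h1]; simp [dotProduct, sq]
  have h3 := sv_sq_lower hs X hX v
  rw [h2] at h3
  have hv2 : 0 < ∑ i, v i ^ 2 := by
    obtain ⟨i, hi⟩ : ∃ i, v i ≠ 0 := by
      by_contra h; push_neg at h; exact hv0 (funext h)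
    exact Finset.sum_pos' (fun j _ => sq_nonneg _) ⟨i, Finset.mem_univ i, by positivity⟩
  nlinarith [mul_pos (pow_pos hs 2) hv2]

lemma core_bound {D d : ℕ} {s : ℝ} (hs : 0 < s) (X : Matrix (Fin D) (Fin d) ℝ)
    (hX : s ≤ sigmaMin X) (w : Fin d → ℝ) :
    ∑ j, ((X * (Xᵀ * X)⁻¹) *ᵥ w) j ^ 2 ≤ (1 / s ^ 2) * ∑ k, w k ^ 2 := by
  have hdet := gram_det_isUnit hs X hX
  set u : Fin d → ℝ := (Xᵀ * X)⁻¹ *ᵥ w with hu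
  have hXu : (X * (Xᵀ * X)⁻¹) *ᵥ w = X *ᵥ u := (Matrix.mulVec_mulVec w X (Xᵀ * X)⁻¹).symm
  have hw : (Xᵀ * X) *ᵥ u = w := by
    rw [hu, Matrix.mulVec_mulVec, Matrix.mul_nonsing_inv _ hdet, Matrix.one_mulVec]
  set α : ℝ := ∑ j, (X *ᵥ u) j ^ 2 with hα
  have hαd : α = u ⬝ᵥ w := by
    rw [← hw, gram_dot, hα]; simp [dotProduct, sq]
  set β : ℝ := ∑ i, u i ^ 2 with hβ
  set γ : ℝ := ∑ k, w k ^ 2 with hγ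
  have hCS : α ^ 2 ≤ β * γ := by
    rw [hαd]
    simpa [dotProduct] using Finset.sum_mul_sq_le_sq_mul_sq Finset.univ u w
  have hlow : s ^ 2 * β ≤ α := sv_sq_lower hs X hX u
  have hα0 : 0 ≤ α := Finset.sum_nonneg fun _ _ => sq_nonneg _
  have hγ0 : 0 ≤ γ := Finset.sum_nonneg fun _ _ => sq_nonneg _
  have hβ0 : 0 ≤ β := Finset.sum_nonneg fun _ _ => sq_nonneg _
  rw [hXu, ← hα]
  rcases eq_or_lt_of_le hα0 with h0 | h0
  · rw [← h0]; positivity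
  · rw [div_mul_eq_mul_div, one_mul, le_div_iff₀ (by positivity)]
    nlinarith [mul_le_mul_of_nonneg_right hlow hγ0]

lemma mul_pinv_bound {D d m : ℕ} {s : ℝ} (hs : 0 < s) (X : Matrix (Fin D) (Fin d) ℝ)
    (hX : s ≤ sigmaMin X) (M : Matrix (Fin m) (Fin d) ℝ) :
    frobSq (M * ((Xᵀ * X)⁻¹ * Xᵀ)) ≤ (1 / s ^ 2) * frobSq M := by
  simp only [frobSq]
  rw [Finset.mul_sum]
  refine Finset.sum_le_sum fun i _ => ?_
  have hB : ((Xᵀ * X)⁻¹ * Xᵀ)ᵀ = X * (Xᵀ * X)⁻¹ := by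
    rw [Matrix.transpose_mul, Matrix.transpose_transpose, Matrix.transpose_nonsing_inv,
      Matrix.transpose_mul, Matrix.transpose_transpose]
  have hrow : ∀ j, (M * ((Xᵀ * X)⁻¹ * Xᵀ)) i j = ((X * (Xᵀ * X)⁻¹) *ᵥ (M i)) j := by
    intro j
    rw [← hB]
    simp [Matrix.mul_apply, Matrix.mulVec, dotProduct, Matrix.transpose_apply, mul_comm]
  calc ∑ j, (M * ((Xᵀ * X)⁻¹ * Xᵀ)) i j ^ 2
      = ∑ j, ((X * (Xᵀ * X)⁻¹) *ᵥ (M i)) j ^ 2 :=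
        Finset.sum_congr rfl fun j _ => by rw [hrow]
    _ ≤ (1 / s ^ 2) * ∑ k, M i k ^ 2 := core_bound hs X hX (M i)

lemma proj_symm {D d : ℕ} (X : Matrix (Fin D) (Fin d) ℝ) : (proj X)ᵀ = proj X := by
  simp only [proj]
  rw [Matrix.transpose_mul, Matrix.transpose_mul, Matrix.transpose_transpose,
    Matrix.transpose_nonsing_inv, Matrix.transpose_mul, Matrix.transpose_transpose]
  simp only [Matrix.mul_assoc]

lemma proj_mul_self {D d : ℕ} (X : Matrix (Fin D) (Fin d) ℝ) (hdet : IsUnit (Xᵀ * X).det) :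
    proj X * X = X := by
  simp only [proj]
  rw [Matrix.mul_assoc, Matrix.mul_assoc, Matrix.nonsing_inv_mul _ hdet, Matrix.mul_one]

lemma proj_idem {D d : ℕ} (X : Matrix (Fin D) (Fin d) ℝ) (hdet : IsUnit (Xᵀ * X).det) :
    proj X * proj X = proj X := by
  nth_rewrite 2 [proj]
  rw [← Matrix.mul_assoc, ← Matrix.mul_assoc, proj_mul_self X hdet]
  rw [proj, Matrix.mul_assoc]

theorem stmt2 {D d : ℕ} (s : ℝ) (hs : 0 < s) (X Y : Matrix (Fin D) (Fin d) ℝ)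
    (hX : s ≤ sigmaMin X) (hY : s ≤ sigmaMin Y) :
    frob (proj X - proj Y) ≤ (Real.sqrt 2 / s) * frob (X - Y) := by
  have hdX := gram_det_isUnit hs X hX
  have hdY := gram_det_isUnit hs Y hY
  set P : Matrix (Fin D) (Fin D) ℝ := proj X with hPdef
  set Q : Matrix (Fin D) (Fin D) ℝ := proj Y with hQdef
  have hPs : Pᵀ = P := proj_symm X
  have hQs : Qᵀ = Q := proj_symm Y
  have hPX : P * X = X := proj_mul_self X hdX
  have hQY : Q * Y = Y := proj_mul_self Y hdY
  have hPP : P * P = P := proj_idem X hdX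
  have hQQ : Q * Q = Q := proj_idem Y hdY
  set A1 : Matrix (Fin D) (Fin D) ℝ := (1 - Q) * P with hA1def
  set A2 : Matrix (Fin D) (Fin D) ℝ := Q * (1 - P) with hA2def
  have hdecomp : P - Q = A1 - A2 := by
    rw [hA1def, hA2def]
    noncomm_ring
  have horth : A1ᵀ * A2 = 0 := by
    have h1 : (1 - Q) * Q = 0 := by rw [Matrix.sub_mul, Matrix.one_mul, hQQ, sub_self]
    calc A1ᵀ * A2 = (Pᵀ * (1 - Q)ᵀ) * (Q * (1 - P)) := by rw [hA1def, Matrix.transpose_mul]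
      _ = P * (((1 - Q) * Q) * (1 - P)) := by
          rw [hPs, Matrix.transpose_sub, Matrix.transpose_one, hQs,
            Matrix.mul_assoc, ← Matrix.mul_assoc (1 - Q)]
      _ = 0 := by rw [h1, Matrix.zero_mul, Matrix.mul_zero]
  have hinner0 : frobInner A1 A2 = 0 := by
    rw [frobInner_eq_trace, horth, Matrix.trace_zero]
  have hpyth : frobSq (P - Q) = frobSq A1 + frobSq A2 := by
    rw [hdecomp, frobSq_sub, hinner0]
    ring
  -- bound on A1
  have hA1eq : A1 = ((1 - Q) * (X - Y)) * ((Xᵀ * X)⁻¹ * Xᵀ) := by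
    have h1 : (1 - Q) * (X - Y) = (1 - Q) * X := by
      rw [Matrix.mul_sub, Matrix.sub_mul, Matrix.sub_mul, Matrix.one_mul, Matrix.one_mul, hQY]
      abel
    rw [hA1def, hPdef, proj, Matrix.mul_assoc X, ← Matrix.mul_assoc (1 - Q) X, h1]
  have hb1 : frobSq A1 ≤ (1 / s ^ 2) * frobSq (X - Y) := by
    calc frobSq A1 ≤ (1 / s ^ 2) * frobSq ((1 - Q) * (X - Y)) := by
          rw [hA1eq]; exact mul_pinv_bound hs X hX _
      _ ≤ (1 / s ^ 2) * frobSq (X - Y) := by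
          have := frobSq_contract Q hQs hQQ (X - Y)
          have hpos : (0:ℝ) ≤ 1 / s ^ 2 := by positivity
          exact mul_le_mul_of_nonneg_left this hpos
  -- bound on A2
  have hA2T : A2ᵀ = (1 - P) * Q := by
    rw [hA2def, Matrix.transpose_mul, Matrix.transpose_sub, Matrix.transpose_one, hPs, hQs]
  have hA2eq : A2ᵀ = ((1 - P) * (Y - X)) * ((Yᵀ * Y)⁻¹ * Yᵀ) := by
    have h1 : (1 - P) * (Y - X) = (1 - P) * Y := by
      rw [Matrix.mul_sub, Matrix.sub_mul, Matrix.sub_mul, Matrix.one_mul, Matrix.one_mul, hPX]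
      abel
    rw [hA2T, hQdef, proj, Matrix.mul_assoc Y, ← Matrix.mul_assoc (1 - P) Y, h1]
  have hb2 : frobSq A2 ≤ (1 / s ^ 2) * frobSq (X - Y) := by
    rw [← frobSq_transpose A2]
    calc frobSq A2ᵀ ≤ (1 / s ^ 2) * frobSq ((1 - P) * (Y - X)) := by
          rw [hA2eq]; exact mul_pinv_bound hs Y hY _
      _ ≤ (1 / s ^ 2) * frobSq (Y - X) := by
          have := frobSq_contract P hPs hPP (Y - X)
          have hpos : (0:ℝ) ≤ 1 / s ^ 2 := by positivity
          exact mul_le_mul_of_nonneg_left this hpos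
      _ = (1 / s ^ 2) * frobSq (X - Y) := by rw [frobSq_sub_comm]
  have hfinal : frobSq (P - Q) ≤ (Real.sqrt 2 / s) ^ 2 * frobSq (X - Y) := by
    have h2s : (Real.sqrt 2 / s) ^ 2 = 2 / s ^ 2 := by
      rw [div_pow, Real.sq_sqrt (by norm_num : (0:ℝ) ≤ 2)]
    have hsum : (2 / s ^ 2) * frobSq (X - Y)
        = (1 / s ^ 2) * frobSq (X - Y) + (1 / s ^ 2) * frobSq (X - Y) := by ring
    rw [h2s, hsum, hpyth]
    exact add_le_add hb1 hb2
  rw [frob, frob]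
  have hstep := Real.sqrt_le_sqrt hfinal
  rwa [Real.sqrt_mul (sq_nonneg _), Real.sqrt_sq (by positivity)] at hstep
end

section
/- The ρ-metric is strictly weaker than the H¹ norm: on Ω = (0,1)^d with s ∈ (0,1) and 0 < a < 1−s, the sequence φ_k(z) = (z₁ − (a/k)cos(k z₁), z₂, …, z_d) lies in E^d(s), satisfies ρ(φ_k, id) → 0, but ‖Dφ_k − D(id)‖²_{L²} → (a²/2)|Ω| > 0, so φ_k does not converge to the identity in H¹. -/
open MeasureTheory Filter Topology Matrix

lemma jac_id {d : ℕ} (z : Fin d → ℝ) : jac (fun w : Fin d → ℝ => w) z = 1 := by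
  ext i j
  simp [jac, fderiv_id', Pi.single_apply, Matrix.one_apply, eq_comm]

lemma jac_phi {d : ℕ} [NeZero d] (a c : ℝ) (hc : c ≠ 0) (z : Fin d → ℝ) :
    jac (fun z i => if i = 0 then z 0 - (a / c) * Real.cos (c * z 0) else z i) z
      = Matrix.diagonal (fun i => if i = 0 then 1 + a * Real.sin (c * z 0) else 1) := by
  set L : (Fin d → ℝ) →L[ℝ] (Fin d → ℝ) := ContinuousLinearMap.pi
    (fun i => if i = 0 then (1 + a * Real.sin (c * z 0)) • ContinuousLinearMap.proj 0
      else ContinuousLinearMap.proj i) with hLdef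
  have hL : HasFDerivAt (fun z : Fin d → ℝ =>
      (fun i => if i = 0 then z 0 - (a / c) * Real.cos (c * z 0) else z i)) L z := by
    apply hasFDerivAt_pi''
    intro i
    have hproj : ∀ j : Fin d, (ContinuousLinearMap.proj j).comp L
        = if j = 0 then (1 + a * Real.sin (c * z 0)) • ContinuousLinearMap.proj (R := ℝ)
            (φ := fun _ : Fin d => ℝ) 0 else ContinuousLinearMap.proj j := by
      intro j; ext v; simp [hLdef, ContinuousLinearMap.proj_pi]
    rw [hproj]
    by_cases hi : i = 0
    · subst hi
      simp only [if_pos rfl, if_true]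
      have h1 : HasFDerivAt (fun x : Fin d → ℝ => x 0)
          (ContinuousLinearMap.proj (R := ℝ) (φ := fun _ : Fin d => ℝ) 0) z :=
        hasFDerivAt_apply 0 z
      have h2 : HasDerivAt (fun t : ℝ => Real.cos (c * t)) (-Real.sin (c * z 0) * c) (z 0) := by
        have := (Real.hasDerivAt_cos (c * z 0)).comp (z 0) ((hasDerivAt_id (z 0)).const_mul c)
        simpa [mul_comm, Function.comp_def] using this
      have h3 := h2.comp_hasFDerivAt z h1
      have h4 := h1.sub (h3.const_mul (a / c))
      convert h4 using 1
      · funext v; rfl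
      ext v
      simp only [ContinuousLinearMap.smul_apply, ContinuousLinearMap.sub_apply,
        ContinuousLinearMap.proj_apply, ContinuousLinearMap.smul_apply, smul_eq_mul]
      field_simp
      ring
    · simp only [if_neg hi]
      exact hasFDerivAt_apply i z
  ext i j
  simp only [jac, Matrix.of_apply, hL.fderiv, hLdef, ContinuousLinearMap.pi_apply,
    Matrix.diagonal_apply]
  by_cases hi : i = 0 <;> by_cases hj : j = 0 <;>
    simp [hi, hj, Pi.single_apply, eq_comm]

lemma proj_diagonal {d : ℕ} (v : Fin d → ℝ) (hv : ∀ i, v i ≠ 0) :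
    proj (Matrix.diagonal v) = 1 := by
  have hinv : (Matrix.diagonal (fun i => v i * v i))⁻¹
      = Matrix.diagonal (fun i => (v i * v i)⁻¹) := by
    apply Matrix.inv_eq_right_inv
    rw [Matrix.diagonal_mul_diagonal]
    have : (fun i => v i * v i * (v i * v i)⁻¹) = fun _ => (1:ℝ) :=
      funext fun i => by field_simp [hv i]
    rw [this, Matrix.diagonal_one]
  unfold proj
  rw [Matrix.diagonal_transpose, Matrix.diagonal_mul_diagonal, hinv,
    Matrix.diagonal_mul_diagonal, Matrix.diagonal_mul_diagonal]
  have : (fun i => v i * (v i * v i)⁻¹ * v i) = fun _ => (1:ℝ) :=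
    funext fun i => by field_simp [hv i]
  rw [this, Matrix.diagonal_one]

lemma frobSq_diagonal {d : ℕ} (v : Fin d → ℝ) :
    frobSq (Matrix.diagonal v) = ∑ i, v i ^ 2 := by
  unfold frobSq
  congr 1; funext i
  rw [Finset.sum_eq_single i]
  · simp
  · intro j _ hj; simp [Matrix.diagonal_apply_ne' _ hj]
  · simp

lemma evnorm_single {d : ℕ} [NeZero d] : evnorm (Pi.single (0 : Fin d) (1:ℝ)) = 1 := by
  unfold evnorm
  rw [Finset.sum_eq_single (0 : Fin d)] <;> simp +contextual [Pi.single_apply]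

lemma sigmaMin_diagonal_ge {d : ℕ} [NeZero d] (s : ℝ) (hs : 0 ≤ s) (v : Fin d → ℝ)
    (hv : ∀ i, s ≤ |v i|) : s ≤ sigmaMin (Matrix.diagonal v) := by
  unfold sigmaMin
  apply le_csInf
  · exact ⟨_, Pi.single 0 1, evnorm_single, rfl⟩
  · rintro r ⟨w, hw, rfl⟩
    have hw2 : ∑ i, w i ^ 2 = 1 := by
      have := congrArg (· ^ 2) hw
      simpa [evnorm, Real.sq_sqrt (Finset.sum_nonneg fun i _ => sq_nonneg (w i))] using this
    unfold evnorm
    rw [Real.le_sqrt hs (Finset.sum_nonneg fun i _ => sq_nonneg _)]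
    calc s ^ 2 = ∑ i, s ^ 2 * w i ^ 2 := by rw [← Finset.mul_sum, hw2, mul_one]
    _ ≤ ∑ i, ((Matrix.diagonal v).mulVec w i) ^ 2 := by
        apply Finset.sum_le_sum
        intro i _
        rw [Matrix.mulVec_diagonal, mul_pow]
        have : s ^ 2 ≤ v i ^ 2 := by
          have := pow_le_pow_left₀ hs (hv i) 2
          simpa [sq_abs] using this
        exact mul_le_mul_of_nonneg_right this (sq_nonneg _)

lemma integral_cube {d : ℕ} [NeZero d] (g : ℝ → ℝ) :
    ∫ z in (Set.univ.pi fun _ : Fin d => Set.Ioo (0:ℝ) 1), g (z 0)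
      = ∫ t in Set.Ioo (0:ℝ) 1, g t := by
  have key := MeasureTheory.integral_fintype_prod_eq_prod (𝕜 := ℝ) (ι := Fin d) (μ := fun _ => volume)
      (f := fun i t => if i = 0 then (Set.Ioo (0:ℝ) 1).indicator g t
        else (Set.Ioo (0:ℝ) 1).indicator (fun _ => 1) t)
  have hmeas : MeasurableSet (Set.univ.pi fun _ : Fin d => Set.Ioo (0:ℝ) 1) :=
    MeasurableSet.univ_pi fun _ => measurableSet_Ioo
  have hfun : (fun z : Fin d → ℝ => ∏ i, if i = 0 then (Set.Ioo (0:ℝ) 1).indicator g (z i)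
        else (Set.Ioo (0:ℝ) 1).indicator (fun _ => 1) (z i))
      = (Set.univ.pi fun _ : Fin d => Set.Ioo (0:ℝ) 1).indicator (fun z => g (z 0)) := by
    funext z
    by_cases hz : z ∈ Set.univ.pi fun _ : Fin d => Set.Ioo (0:ℝ) 1
    · rw [Set.indicator_of_mem hz]
      have hz' : ∀ i, z i ∈ Set.Ioo (0:ℝ) 1 := fun i => hz i (Set.mem_univ i)
      have step : ∀ i ∈ Finset.univ, (if i = 0 then (Set.Ioo (0:ℝ) 1).indicator g (z i)
          else (Set.Ioo (0:ℝ) 1).indicator (fun _ => (1:ℝ)) (z i))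
          = if i = 0 then g (z 0) else 1 := by
        intro i _
        rcases eq_or_ne i 0 with rfl | hi
        · simp [Set.indicator_of_mem (hz' 0)]
        · simp [hi, Set.indicator_of_mem (hz' i)]
      rw [Finset.prod_congr rfl step, Finset.prod_ite_eq' Finset.univ (0 : Fin d)
        (fun _ => g (z 0))]
      simp
    · rw [Set.indicator_of_notMem hz]
      obtain ⟨i, -, hi⟩ : ∃ i, i ∈ Set.univ ∧ z i ∉ Set.Ioo (0:ℝ) 1 := by
        simpa [Set.mem_pi] using hz
      apply Finset.prod_eq_zero (Finset.mem_univ i)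
      rcases eq_or_ne i 0 with rfl | h0
      · simp [Set.indicator_of_notMem hi]
      · simp [h0, Set.indicator_of_notMem hi]
  rw [hfun] at key
  rw [MeasureTheory.integral_indicator hmeas] at key
  rw [← MeasureTheory.volume_pi] at key
  rw [key]
  have h1 : ∀ i : Fin d, (∫ t : ℝ, if i = 0 then (Set.Ioo (0:ℝ) 1).indicator g t
      else (Set.Ioo (0:ℝ) 1).indicator (fun _ => (1:ℝ)) t)
      = if i = 0 then ∫ t in Set.Ioo (0:ℝ) 1, g t else 1 := by
    intro i
    rcases eq_or_ne i 0 with rfl | hi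
    · simp [MeasureTheory.integral_indicator measurableSet_Ioo]
    · simp [hi, MeasureTheory.integral_indicator measurableSet_Ioo]
  rw [Finset.prod_congr rfl (fun i _ => h1 i), Finset.prod_ite_eq' Finset.univ (0 : Fin d)
    (fun _ => ∫ t in Set.Ioo (0:ℝ) 1, g t)]
  simp

lemma integral_Ioo_eq (f : ℝ → ℝ) :
    ∫ t in Set.Ioo (0:ℝ) 1, f t = ∫ t in (0:ℝ)..1, f t := by
  rw [intervalIntegral.integral_of_le (by norm_num : (0:ℝ) ≤ 1),
    ← MeasureTheory.integral_Ioc_eq_integral_Ioo]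

lemma integral_sin_sq_scaled (c : ℝ) (hc : c ≠ 0) :
    ∫ t in (0:ℝ)..1, Real.sin (c * t) ^ 2 = 1/2 - Real.sin c * Real.cos c / (2 * c) := by
  rw [intervalIntegral.integral_comp_mul_left (fun u => Real.sin u ^ 2) hc]
  rw [mul_zero, mul_one, integral_sin_sq]
  simp only [Real.sin_zero, Real.cos_zero]
  field_simp
  linear_combination (c - Real.sin c * Real.cos c) * mul_inv_cancel₀ hc

lemma integral_cos_sq_scaled (c : ℝ) (hc : c ≠ 0) :
    ∫ t in (0:ℝ)..1, Real.cos (c * t) ^ 2 = 1/2 + Real.sin c * Real.cos c / (2 * c) := by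
  rw [intervalIntegral.integral_comp_mul_left (fun u => Real.cos u ^ 2) hc]
  rw [mul_zero, mul_one, integral_cos_sq]
  simp only [Real.sin_zero, Real.cos_zero]
  field_simp
  linear_combination (c + Real.cos c * Real.sin c) * mul_inv_cancel₀ hc

theorem stmt8 {d : ℕ} [NeZero d] (s a : ℝ) (hs0 : 0 < s) (hs1 : s < 1)
    (ha0 : 0 < a) (ha : a < 1 - s) :
    let Ω : Set (Fin d → ℝ) := Set.univ.pi fun _ => Set.Ioo (0:ℝ) 1
    let φseq : ℕ → (Fin d → ℝ) → (Fin d → ℝ) := fun k z i =>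
      if i = 0 then z 0 - (a / ((k:ℝ)+1)) * Real.cos (((k:ℝ)+1) * z 0) else z i
    (∀ k z, s ≤ sigmaMin (jac (φseq k) z)) ∧
    Tendsto (fun k => rho Ω (φseq k) (fun z => z)) atTop (𝓝 0) ∧
    Tendsto (fun k => ∫ z in Ω, frobSq (jac (φseq k) z - jac (fun w => w) z)) atTop
      (𝓝 (a ^ 2 / 2)) ∧
    ¬ Tendsto (fun k => ∫ z in Ω, frobSq (jac (φseq k) z - jac (fun w => w) z)) atTop
      (𝓝 0) := by
  intro Ω φseq
  set c : ℕ → ℝ := fun k => (k:ℝ) + 1 with hcdef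
  have hc0 : ∀ k, (0:ℝ) < c k := fun k => by positivity
  have hc1 : ∀ k, (1:ℝ) ≤ c k := fun k => by simp [hcdef]
  have ha1 : a < 1 := by linarith
  have hsa : s < 1 - a := by linarith
  -- Jacobian computation
  have hjac : ∀ k z, jac (φseq k) z
      = Matrix.diagonal (fun i => if i = 0 then 1 + a * Real.sin (c k * z 0) else 1) :=
    fun k z => jac_phi a (c k) (hc0 k).ne' z
  have hvpos : ∀ k (z : Fin d → ℝ) (i : Fin d),
      (0:ℝ) < if i = 0 then 1 + a * Real.sin (c k * z 0) else 1 := by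
    intro k z i
    rcases eq_or_ne i 0 with rfl | hi
    · rw [if_pos rfl]
      nlinarith [Real.neg_one_le_sin (c k * z 0)]
    · simp [hi]
  -- Part 1
  have part1 : ∀ k z, s ≤ sigmaMin (jac (φseq k) z) := by
    intro k z
    rw [hjac k z]
    apply sigmaMin_diagonal_ge s hs0.le
    intro i
    rw [abs_of_pos (hvpos k z i)]
    rcases eq_or_ne i 0 with rfl | hi
    · rw [if_pos rfl]
      nlinarith [Real.neg_one_le_sin (c k * z 0)]
    · simp [hi, hs1.le]
  -- Part 3 : exact value of the H¹ distance
  have part3eq : ∀ k, (∫ z in Ω, frobSq (jac (φseq k) z - jac (fun w => w) z))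
      = a ^ 2 * (1/2 - Real.sin (c k) * Real.cos (c k) / (2 * c k)) := by
    intro k
    have hpt : ∀ z : Fin d → ℝ, frobSq (jac (φseq k) z - jac (fun w => w) z)
        = a ^ 2 * Real.sin (c k * z 0) ^ 2 := by
      intro z
      rw [hjac k z, jac_id, ← Matrix.diagonal_one, Matrix.diagonal_sub, frobSq_diagonal]
      rw [Finset.sum_eq_single (0 : Fin d)]
      · rw [if_pos rfl]
        ring
      · intro j _ hj; simp [hj]
      · simp
    rw [MeasureTheory.integral_congr_ae (Filter.Eventually.of_forall fun z => hpt z)]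
    rw [integral_cube (fun t => a ^ 2 * Real.sin (c k * t) ^ 2), integral_Ioo_eq,
      intervalIntegral.integral_const_mul, integral_sin_sq_scaled (c k) (hc0 k).ne']
  have hterm : Tendsto (fun k => Real.sin (c k) * Real.cos (c k) / (2 * c k)) atTop (𝓝 0) := by
    refine squeeze_zero_norm (fun k => ?_) tendsto_one_div_add_atTop_nhds_zero_nat
    rw [Real.norm_eq_abs, abs_div, abs_of_pos (by positivity : (0:ℝ) < 2 * c k)]
    have h1 : |Real.sin (c k) * Real.cos (c k)| ≤ 1 := by
      rw [abs_mul]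
      nlinarith [Real.abs_sin_le_one (c k), Real.abs_cos_le_one (c k),
        abs_nonneg (Real.sin (c k)), abs_nonneg (Real.cos (c k))]
    calc |Real.sin (c k) * Real.cos (c k)| / (2 * c k) ≤ 1 / (2 * c k) := by gcongr
    _ ≤ 1 / ((k:ℝ) + 1) := by
          apply one_div_le_one_div_of_le (by positivity)
          simp [hcdef]
          linarith [Nat.cast_nonneg (α := ℝ) k]
  have part3 : Tendsto (fun k => ∫ z in Ω, frobSq (jac (φseq k) z - jac (fun w => w) z))
      atTop (𝓝 (a ^ 2 / 2)) := by
    rw [funext part3eq]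
    have h2 := ((tendsto_const_nhds (x := (1:ℝ)/2) (f := atTop (α := ℕ))).sub
      hterm).const_mul (a ^ 2)
    simpa [mul_comm, mul_sub, sub_zero, div_eq_mul_inv] using h2
  -- Part 2 : rho tends to zero
  have hrhoeq : ∀ k, rho Ω (φseq k) (fun z => z)
      = Real.sqrt ((a / c k) ^ 2 * (1/2 + Real.sin (c k) * Real.cos (c k) / (2 * c k))) := by
    intro k
    unfold rho
    congr 1
    have hpt : ∀ z : Fin d → ℝ,
        evnorm (φseq k z - z) ^ 2 + (1/2) * frobSq (proj (jac (φseq k) z)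
          - proj (jac (fun z : Fin d → ℝ => z) z))
        = (a / c k) ^ 2 * Real.cos (c k * z 0) ^ 2 := by
      intro z
      have hp1 : proj (jac (φseq k) z) = 1 := by
        rw [hjac k z]
        exact proj_diagonal _ (fun i => (hvpos k z i).ne')
      have hp2 : proj (jac (fun z : Fin d → ℝ => z) z) = 1 := by
        rw [jac_id, ← Matrix.diagonal_one]
        exact proj_diagonal _ (fun i => one_ne_zero)
      rw [hp1, hp2, sub_self]
      have hfz : frobSq (0 : Matrix (Fin d) (Fin d) ℝ) = 0 := by simp [frobSq]
      rw [hfz, mul_zero, add_zero]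
      unfold evnorm
      rw [Real.sq_sqrt (Finset.sum_nonneg fun i _ => sq_nonneg _)]
      rw [Finset.sum_eq_single (0 : Fin d)]
      · have hval : (φseq k z - z) 0 = -(a / c k * Real.cos (c k * z 0)) := by
          rw [Pi.sub_apply]
          show (if (0 : Fin d) = 0 then z 0 - a / ((k:ℝ)+1) * Real.cos (((k:ℝ)+1) * z 0)
            else z 0) - z 0 = _
          rw [if_pos rfl]
          simp only [hcdef]
          ring
        rw [hval]
        rw [neg_pow, mul_pow]
        simp [div_pow]
      · intro j _ hj
        have : (φseq k z - z) j = 0 := by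
          rw [Pi.sub_apply]
          show (if j = 0 then _ else z j) - z j = 0
          rw [if_neg hj, sub_self]
        rw [this]
        ring
      · simp
    rw [MeasureTheory.integral_congr_ae (Filter.Eventually.of_forall fun z => hpt z)]
    rw [integral_cube (fun t => (a / c k) ^ 2 * Real.cos (c k * t) ^ 2), integral_Ioo_eq,
      intervalIntegral.integral_const_mul, integral_cos_sq_scaled (c k) (hc0 k).ne']
  have hrhole : ∀ k, rho Ω (φseq k) (fun z => z) ≤ a / c k := by
    intro k
    rw [hrhoeq k]
    have hX : 1/2 + Real.sin (c k) * Real.cos (c k) / (2 * c k) ≤ 1 := by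
      have h1 : Real.sin (c k) * Real.cos (c k) ≤ 1 := by
        nlinarith [Real.sin_le_one (c k), Real.cos_le_one (c k),
          Real.neg_one_le_sin (c k), Real.neg_one_le_cos (c k)]
      have h2 : Real.sin (c k) * Real.cos (c k) / (2 * c k) ≤ 1 / 2 := by
        rw [div_le_div_iff₀ (by positivity) (by norm_num)]
        nlinarith [hc1 k]
      linarith
    calc Real.sqrt ((a / c k) ^ 2 * (1/2 + Real.sin (c k) * Real.cos (c k) / (2 * c k)))
        ≤ Real.sqrt ((a / c k) ^ 2 * 1) :=
          Real.sqrt_le_sqrt (mul_le_mul_of_nonneg_left hX (sq_nonneg _))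
    _ = a / c k := by rw [mul_one, Real.sqrt_sq (by positivity)]
  have hrhonn : ∀ k, 0 ≤ rho Ω (φseq k) (fun z => z) := fun k => Real.sqrt_nonneg _
  have part2 : Tendsto (fun k => rho Ω (φseq k) (fun z => z)) atTop (𝓝 0) := by
    refine squeeze_zero hrhonn hrhole ?_
    have := tendsto_one_div_add_atTop_nhds_zero_nat.const_mul a
    simpa [div_eq_mul_inv, mul_comm, hcdef] using this
  refine ⟨part1, part2, part3, ?_⟩
  intro hcontra
  have := tendsto_nhds_unique part3 hcontra
  nlinarith
end

section
/- Let X, Y ∈ R^{D×d} satisfy s ≤ σ_min(X), σ_min(Y) and σ_max(X), σ_max(Y) ≤ R. Then the Moore–Penrose pseudo-inverses satisfy ‖X^† − Y^†‖_F ≤ (s^{-2} + √2 R² s^{-4}) ‖X − Y‖_F, and ‖X^†‖_2 ≤ 1/s. -/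
open MeasureTheory Filter Topology Matrix

lemma evnorm_nonneg {n : ℕ} (v : Fin n → ℝ) : 0 ≤ evnorm v := Real.sqrt_nonneg _

lemma evnorm_sq {n : ℕ} (v : Fin n → ℝ) : evnorm v ^ 2 = ∑ i, v i ^ 2 :=
  Real.sq_sqrt (Finset.sum_nonneg fun i _ => sq_nonneg _)

lemma dot_self_eq {n : ℕ} (v : Fin n → ℝ) : v ⬝ᵥ v = ∑ i, v i ^ 2 := by
  simp [dotProduct, sq]

lemma evnorm_eq_sqrt_dot {n : ℕ} (v : Fin n → ℝ) : evnorm v = Real.sqrt (v ⬝ᵥ v) := by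
  rw [dot_self_eq]; rfl

lemma evnorm_sq_dot {n : ℕ} (v : Fin n → ℝ) : evnorm v ^ 2 = v ⬝ᵥ v := by
  rw [evnorm_sq, dot_self_eq]

lemma evnorm_eq_zero {n : ℕ} {v : Fin n → ℝ} (h : evnorm v = 0) : v = 0 := by
  have h2 : ∑ i, v i ^ 2 = 0 := by
    have := congrArg (· ^ 2) h
    simpa [evnorm_sq v] using this
  funext i
  have := (Finset.sum_eq_zero_iff_of_nonneg (fun j _ => sq_nonneg (v j))).mp h2 i (Finset.mem_univ i)
  exact pow_eq_zero_iff (by norm_num) |>.mp this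

lemma evnorm_smul {n : ℕ} (c : ℝ) (v : Fin n → ℝ) : evnorm (c • v) = |c| * evnorm v := by
  unfold evnorm
  rw [show ∑ i, (c • v) i ^ 2 = c ^ 2 * ∑ i, v i ^ 2 by
    rw [Finset.mul_sum]; exact Finset.sum_congr rfl fun i _ => by simp [mul_pow]]
  rw [Real.sqrt_mul (sq_nonneg c), Real.sqrt_sq_eq_abs]

lemma dot_le_evnorm_mul {n : ℕ} (u v : Fin n → ℝ) : u ⬝ᵥ v ≤ evnorm u * evnorm v := by
  have h := Finset.sum_mul_sq_le_sq_mul_sq Finset.univ u v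
  calc u ⬝ᵥ v ≤ |∑ i, u i * v i| := le_abs_self _
    _ = Real.sqrt ((∑ i, u i * v i) ^ 2) := (Real.sqrt_sq_eq_abs _).symm
    _ ≤ Real.sqrt ((∑ i, u i ^ 2) * ∑ i, v i ^ 2) := Real.sqrt_le_sqrt h
    _ = evnorm u * evnorm v := Real.sqrt_mul (Finset.sum_nonneg fun i _ => sq_nonneg _) _

lemma frob_nonneg {m n : ℕ} (A : Matrix (Fin m) (Fin n) ℝ) : 0 ≤ frob A := Real.sqrt_nonneg _

lemma frob_sq {m n : ℕ} (A : Matrix (Fin m) (Fin n) ℝ) : frob A ^ 2 = frobSq A :=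
  Real.sq_sqrt (frobSq_nonneg A)

lemma frob_transpose {m n : ℕ} (A : Matrix (Fin m) (Fin n) ℝ) : frob Aᵀ = frob A := by
  unfold frob; rw [frobSq_transpose]

lemma frob_neg {m n : ℕ} (A : Matrix (Fin m) (Fin n) ℝ) : frob (-A) = frob A := by
  unfold frob frobSq; congr 1; exact Finset.sum_congr rfl fun i _ =>
    Finset.sum_congr rfl fun j _ => by simp

lemma frobSq_eq_sum_col {m n : ℕ} (A : Matrix (Fin m) (Fin n) ℝ) :
    frobSq A = ∑ j, evnorm (fun i => A i j) ^ 2 := by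
  unfold frobSq; rw [Finset.sum_comm]
  exact Finset.sum_congr rfl fun j _ => (evnorm_sq _).symm

lemma frob_mul_left {p m n : ℕ} (M : Matrix (Fin p) (Fin m) ℝ) (A : Matrix (Fin m) (Fin n) ℝ)
    {c : ℝ} (hc : 0 ≤ c) (h : ∀ v, evnorm (M *ᵥ v) ≤ c * evnorm v) :
    frob (M * A) ≤ c * frob A := by
  have hcol : ∀ j, (fun i => (M * A) i j) = M *ᵥ (fun i => A i j) := by
    intro j; funext i; simp [Matrix.mul_apply, Matrix.mulVec, dotProduct]
  have hsq : frobSq (M * A) ≤ c ^ 2 * frobSq A := by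
    rw [frobSq_eq_sum_col, frobSq_eq_sum_col, Finset.mul_sum]
    refine Finset.sum_le_sum fun j _ => ?_
    rw [hcol j, ← mul_pow]
    exact pow_le_pow_left₀ (evnorm_nonneg _) (h _) 2
  calc frob (M * A) = Real.sqrt (frobSq (M * A)) := rfl
    _ ≤ Real.sqrt (c ^ 2 * frobSq A) := Real.sqrt_le_sqrt hsq
    _ = c * frob A := by
        rw [Real.sqrt_mul (sq_nonneg c), Real.sqrt_sq hc]; rfl

lemma frob_mul_right {p m n : ℕ} (A : Matrix (Fin m) (Fin n) ℝ) (N : Matrix (Fin n) (Fin p) ℝ)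
    {c : ℝ} (hc : 0 ≤ c) (h : ∀ v, evnorm (Nᵀ *ᵥ v) ≤ c * evnorm v) :
    frob (A * N) ≤ c * frob A := by
  rw [← frob_transpose (A * N), Matrix.transpose_mul]
  calc frob (Nᵀ * Aᵀ) ≤ c * frob Aᵀ := frob_mul_left Nᵀ Aᵀ hc h
    _ = c * frob A := by rw [frob_transpose]

lemma frob_add_le {m n : ℕ} (A B : Matrix (Fin m) (Fin n) ℝ) :
    frob (A + B) ≤ frob A + frob B := by
  have hcs : (∑ i, ∑ j, A i j * B i j) ≤ frob A * frob B := by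
    have h := Finset.sum_mul_sq_le_sq_mul_sq Finset.univ
      (fun p : Fin m × Fin n => A p.1 p.2) (fun p : Fin m × Fin n => B p.1 p.2)
    rw [Fintype.sum_prod_type, Fintype.sum_prod_type, Fintype.sum_prod_type] at h
    calc (∑ i, ∑ j, A i j * B i j) ≤ |∑ i, ∑ j, A i j * B i j| := le_abs_self _
      _ = Real.sqrt ((∑ i, ∑ j, A i j * B i j) ^ 2) := (Real.sqrt_sq_eq_abs _).symm
      _ ≤ Real.sqrt ((∑ i, ∑ j, A i j ^ 2) * ∑ i, ∑ j, B i j ^ 2) := Real.sqrt_le_sqrt h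
      _ = frob A * frob B := Real.sqrt_mul (frobSq_nonneg A) _
  have hexp : frobSq (A + B) = frobSq A + 2 * (∑ i, ∑ j, A i j * B i j) + frobSq B := by
    unfold frobSq
    rw [Finset.mul_sum, ← Finset.sum_add_distrib, ← Finset.sum_add_distrib]
    refine Finset.sum_congr rfl fun i _ => ?_
    rw [Finset.mul_sum, ← Finset.sum_add_distrib, ← Finset.sum_add_distrib]
    refine Finset.sum_congr rfl fun j _ => ?_
    simp [Matrix.add_apply]; ring
  have hle : frobSq (A + B) ≤ (frob A + frob B) ^ 2 := by
    rw [hexp]; nlinarith [frob_sq A, frob_sq B, hcs]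
  calc frob (A + B) = Real.sqrt (frobSq (A + B)) := rfl
    _ ≤ Real.sqrt ((frob A + frob B) ^ 2) := Real.sqrt_le_sqrt hle
    _ = frob A + frob B := Real.sqrt_sq (add_nonneg (frob_nonneg A) (frob_nonneg B))

lemma dot_mulVec_self {D d : ℕ} (X : Matrix (Fin D) (Fin d) ℝ) (v : Fin d → ℝ) :
    v ⬝ᵥ ((Xᵀ * X) *ᵥ v) = (X *ᵥ v) ⬝ᵥ (X *ᵥ v) := by
  rw [← Matrix.mulVec_mulVec, Matrix.dotProduct_mulVec, Matrix.vecMul_transpose]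

lemma dot_transpose_mulVec {D d : ℕ} (X : Matrix (Fin D) (Fin d) ℝ) (w : Fin d → ℝ)
    (v : Fin D → ℝ) : w ⬝ᵥ (Xᵀ *ᵥ v) = (X *ᵥ w) ⬝ᵥ v := by
  rw [Matrix.dotProduct_mulVec, Matrix.vecMul_transpose]

lemma evnorm_mulVec_le_frob {D d : ℕ} (X : Matrix (Fin D) (Fin d) ℝ) (v : Fin d → ℝ) :
    evnorm (X *ᵥ v) ≤ frob X * evnorm v := by
  have hsq : evnorm (X *ᵥ v) ^ 2 ≤ frobSq X * evnorm v ^ 2 := by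
    rw [evnorm_sq, evnorm_sq]
    calc ∑ i, (X *ᵥ v) i ^ 2 ≤ ∑ i, ((∑ j, X i j ^ 2) * ∑ j, v j ^ 2) := by
          refine Finset.sum_le_sum fun i _ => ?_
          have := Finset.sum_mul_sq_le_sq_mul_sq Finset.univ (X i) v
          simpa [Matrix.mulVec, dotProduct] using this
      _ = frobSq X * (∑ j, v j ^ 2) := by rw [← Finset.sum_mul]; rfl
  have h2 : evnorm (X *ᵥ v) ^ 2 ≤ (frob X * evnorm v) ^ 2 := by
    rw [mul_pow, frob_sq]; exact hsq
  calc evnorm (X *ᵥ v) = Real.sqrt (evnorm (X *ᵥ v) ^ 2) := (Real.sqrt_sq (evnorm_nonneg _)).symm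
    _ ≤ Real.sqrt ((frob X * evnorm v) ^ 2) := Real.sqrt_le_sqrt h2
    _ = frob X * evnorm v := Real.sqrt_sq (mul_nonneg (frob_nonneg _) (evnorm_nonneg _))

section Spectral
variable {D d : ℕ} {X : Matrix (Fin D) (Fin d) ℝ} {s : ℝ}

lemma gram_isUnit (hs : 0 < s) (hlow : ∀ v, s * evnorm v ≤ evnorm (X *ᵥ v)) :
    IsUnit (Xᵀ * X).det := by
  refine (Matrix.isUnit_iff_isUnit_det _).mp (Matrix.mulVec_injective_iff_isUnit.mp ?_)
  intro a b hab
  have hz : (Xᵀ * X) *ᵥ (a - b) = 0 := by rw [Matrix.mulVec_sub, hab, sub_self]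
  have h0 : (X *ᵥ (a - b)) ⬝ᵥ (X *ᵥ (a - b)) = 0 := by
    rw [← dot_mulVec_self, hz, dotProduct_zero]
  have h1 : evnorm (X *ᵥ (a - b)) = 0 := by
    rw [evnorm_eq_sqrt_dot, h0, Real.sqrt_zero]
  have h2 := hlow (a - b)
  rw [h1] at h2
  have h3 : evnorm (a - b) = 0 := by
    nlinarith [evnorm_nonneg (a - b)]
  have := evnorm_eq_zero h3
  exact sub_eq_zero.mp this

lemma graminv_bound (hs : 0 < s) (hlow : ∀ v, s * evnorm v ≤ evnorm (X *ᵥ v))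
    (v : Fin d → ℝ) : evnorm ((Xᵀ * X)⁻¹ *ᵥ v) ≤ 1 / s ^ 2 * evnorm v := by
  have hdet := gram_isUnit hs hlow
  set w := (Xᵀ * X)⁻¹ *ᵥ v with hw
  have hXw : (Xᵀ * X) *ᵥ w = v := by
    rw [hw, Matrix.mulVec_mulVec, Matrix.mul_nonsing_inv _ hdet, Matrix.one_mulVec]
  have h1 : s ^ 2 * evnorm w ^ 2 ≤ evnorm w * evnorm v := by
    calc s ^ 2 * evnorm w ^ 2 = (s * evnorm w) ^ 2 := by ring
      _ ≤ evnorm (X *ᵥ w) ^ 2 := pow_le_pow_left₀ (mul_nonneg hs.le (evnorm_nonneg w)) (hlow w) 2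
      _ = w ⬝ᵥ v := by rw [evnorm_sq_dot, ← dot_mulVec_self, hXw]
      _ ≤ evnorm w * evnorm v := dot_le_evnorm_mul w v
  rcases eq_or_lt_of_le (evnorm_nonneg w) with h0 | h0
  · rw [← h0]
    have : 0 ≤ evnorm v := evnorm_nonneg v
    positivity
  · rw [div_mul_eq_mul_div, le_div_iff₀ (by positivity), one_mul]
    nlinarith [evnorm_nonneg v]

lemma pinv_bound (hs : 0 < s) (hlow : ∀ v, s * evnorm v ≤ evnorm (X *ᵥ v))
    (v : Fin D → ℝ) : evnorm (((Xᵀ * X)⁻¹ * Xᵀ) *ᵥ v) ≤ 1 / s * evnorm v := by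
  have hdet := gram_isUnit hs hlow
  set w := ((Xᵀ * X)⁻¹ * Xᵀ) *ᵥ v with hw
  have hXw : (Xᵀ * X) *ᵥ w = Xᵀ *ᵥ v := by
    rw [hw, Matrix.mulVec_mulVec, ← Matrix.mul_assoc, Matrix.mul_nonsing_inv _ hdet, Matrix.one_mul]
  have h1 : evnorm (X *ᵥ w) ^ 2 ≤ evnorm (X *ᵥ w) * evnorm v := by
    calc evnorm (X *ᵥ w) ^ 2 = w ⬝ᵥ (Xᵀ *ᵥ v) := by rw [evnorm_sq_dot, ← dot_mulVec_self, hXw]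
      _ = (X *ᵥ w) ⬝ᵥ v := dot_transpose_mulVec X w v
      _ ≤ evnorm (X *ᵥ w) * evnorm v := dot_le_evnorm_mul _ v
  have h2 : evnorm (X *ᵥ w) ≤ evnorm v := by
    rcases eq_or_lt_of_le (evnorm_nonneg (X *ᵥ w)) with h0 | h0
    · rw [← h0]; exact evnorm_nonneg v
    · nlinarith
  have h3 := (hlow w).trans h2
  rw [div_mul_eq_mul_div, le_div_iff₀ hs, one_mul]
  linarith [h3]

lemma pinvT_bound (hs : 0 < s) (hlow : ∀ v, s * evnorm v ≤ evnorm (X *ᵥ v))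
    (v : Fin d → ℝ) : evnorm ((X * (Xᵀ * X)⁻¹) *ᵥ v) ≤ 1 / s * evnorm v := by
  have hdet := gram_isUnit hs hlow
  set w := (Xᵀ * X)⁻¹ *ᵥ v with hw
  have hXw : (Xᵀ * X) *ᵥ w = v := by
    rw [hw, Matrix.mulVec_mulVec, Matrix.mul_nonsing_inv _ hdet, Matrix.one_mulVec]
  have hrw : (X * (Xᵀ * X)⁻¹) *ᵥ v = X *ᵥ w := by rw [hw, Matrix.mulVec_mulVec]
  have hwb : evnorm w ≤ 1 / s ^ 2 * evnorm v := graminv_bound hs hlow v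
  have h1 : evnorm (X *ᵥ w) ^ 2 ≤ (1 / s * evnorm v) ^ 2 := by
    calc evnorm (X *ᵥ w) ^ 2 = w ⬝ᵥ v := by rw [evnorm_sq_dot, ← dot_mulVec_self, hXw]
      _ ≤ evnorm w * evnorm v := dot_le_evnorm_mul w v
      _ ≤ (1 / s ^ 2 * evnorm v) * evnorm v := by
          have := evnorm_nonneg v
          exact mul_le_mul_of_nonneg_right hwb this
      _ = (1 / s * evnorm v) ^ 2 := by field_simp
  rw [hrw]
  calc evnorm (X *ᵥ w) = Real.sqrt (evnorm (X *ᵥ w) ^ 2) := (Real.sqrt_sq (evnorm_nonneg _)).symm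
    _ ≤ Real.sqrt ((1 / s * evnorm v) ^ 2) := Real.sqrt_le_sqrt h1
    _ = 1 / s * evnorm v := Real.sqrt_sq (mul_nonneg (by positivity) (evnorm_nonneg v))

lemma proj_symm_s16 (hdet : IsUnit (Xᵀ * X).det) :
    (X * (Xᵀ * X)⁻¹ * Xᵀ)ᵀ = X * (Xᵀ * X)⁻¹ * Xᵀ := by
  rw [Matrix.transpose_mul, Matrix.transpose_mul, Matrix.transpose_transpose,
    Matrix.transpose_nonsing_inv, Matrix.transpose_mul, Matrix.transpose_transpose,
    Matrix.mul_assoc]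

lemma proj_idem_s16 (hdet : IsUnit (Xᵀ * X).det) :
    (X * (Xᵀ * X)⁻¹ * Xᵀ) * (X * (Xᵀ * X)⁻¹ * Xᵀ) = X * (Xᵀ * X)⁻¹ * Xᵀ := by
  have key : Xᵀ * (X * ((Xᵀ * X)⁻¹ * Xᵀ)) = Xᵀ := by
    rw [← Matrix.mul_assoc, ← Matrix.mul_assoc, Matrix.mul_nonsing_inv _ hdet, Matrix.one_mul]
  calc (X * (Xᵀ * X)⁻¹ * Xᵀ) * (X * (Xᵀ * X)⁻¹ * Xᵀ)
      = X * ((Xᵀ * X)⁻¹ * (Xᵀ * (X * ((Xᵀ * X)⁻¹ * Xᵀ)))) := by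
        simp only [Matrix.mul_assoc]
    _ = X * (Xᵀ * X)⁻¹ * Xᵀ := by rw [key, Matrix.mul_assoc]

lemma proj_contract (hdet : IsUnit (Xᵀ * X).det) (v : Fin D → ℝ) :
    evnorm ((1 - X * (Xᵀ * X)⁻¹ * Xᵀ) *ᵥ v) ≤ evnorm v := by
  set P := X * (Xᵀ * X)⁻¹ * Xᵀ with hP
  set p := P *ᵥ v with hp
  have hpp : p ⬝ᵥ p = p ⬝ᵥ v := by
    calc p ⬝ᵥ p = p ⬝ᵥ (P *ᵥ v) := rfl
      _ = (p ᵥ* P) ⬝ᵥ v := Matrix.dotProduct_mulVec p P v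
      _ = (Pᵀ *ᵥ p) ⬝ᵥ v := by rw [Matrix.mulVec_transpose]
      _ = (P *ᵥ p) ⬝ᵥ v := by rw [hP, proj_symm_s16 hdet]
      _ = ((P * P) *ᵥ v) ⬝ᵥ v := by rw [hp, Matrix.mulVec_mulVec]
      _ = p ⬝ᵥ v := by rw [hP, proj_idem_s16 hdet]
  have hsub : (1 - P) *ᵥ v = v - p := by rw [Matrix.sub_mulVec, Matrix.one_mulVec]
  have hdot : (v - p) ⬝ᵥ (v - p) ≤ v ⬝ᵥ v := by
    have hexp : (v - p) ⬝ᵥ (v - p) = v ⬝ᵥ v - p ⬝ᵥ p := by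
      rw [sub_dotProduct, dotProduct_sub, dotProduct_sub,
        dotProduct_comm v p, hpp, dotProduct_comm p v]
      ring
    rw [hexp]
    have : 0 ≤ p ⬝ᵥ p := by rw [← evnorm_sq_dot]; positivity
    linarith
  rw [hsub, evnorm_eq_sqrt_dot, evnorm_eq_sqrt_dot]
  exact Real.sqrt_le_sqrt hdot

end Spectral

lemma pinv_diff_identity {D d : ℕ} (X Y : Matrix (Fin D) (Fin d) ℝ)
    (hX : IsUnit (Xᵀ * X).det) (hY : IsUnit (Yᵀ * Y).det) :
    (Xᵀ * X)⁻¹ * Xᵀ - (Yᵀ * Y)⁻¹ * Yᵀ =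
      -(((Xᵀ * X)⁻¹ * Xᵀ) * (X - Y) * ((Yᵀ * Y)⁻¹ * Yᵀ)) +
      ((Xᵀ * X)⁻¹ * (X - Y)ᵀ) * (1 - Y * (Yᵀ * Y)⁻¹ * Yᵀ) := by
  have h1 : (Xᵀ * X)⁻¹ * Xᵀ * X = 1 := by
    rw [Matrix.mul_assoc]; exact Matrix.nonsing_inv_mul _ hX
  have h2 : (Xᵀ * X)⁻¹ * Yᵀ * Y * (Yᵀ * Y)⁻¹ = (Xᵀ * X)⁻¹ := by
    rw [Matrix.mul_assoc ((Xᵀ * X)⁻¹) Yᵀ Y, Matrix.mul_assoc ((Xᵀ * X)⁻¹) (Yᵀ * Y) _,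
      Matrix.mul_nonsing_inv _ hY, Matrix.mul_one]
  simp only [Matrix.mul_sub, Matrix.sub_mul, Matrix.transpose_sub, Matrix.mul_one,
    ← Matrix.mul_assoc]
  rw [h1, h2, Matrix.one_mul]
  abel


lemma sigmaMin_le_apply' {m n : ℕ} (A : Matrix (Fin m) (Fin n) ℝ) {v : Fin n → ℝ}
    (hv : evnorm v = 1) : sigmaMin A ≤ evnorm (A *ᵥ v) := by
  refine csInf_le ⟨0, ?_⟩ ⟨v, hv, rfl⟩
  rintro r ⟨w, hw, rfl⟩; exact evnorm_nonneg _

lemma apply_le_sigmaMax {m n : ℕ} (A : Matrix (Fin m) (Fin n) ℝ) {v : Fin n → ℝ}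
    (hv : evnorm v = 1) : evnorm (A *ᵥ v) ≤ sigmaMax A := by
  refine le_csSup ⟨frob A, ?_⟩ ⟨v, hv, rfl⟩
  rintro r ⟨w, hw, rfl⟩
  calc evnorm (A *ᵥ w) ≤ frob A * evnorm w := evnorm_mulVec_le_frob A w
    _ = frob A := by rw [hw, mul_one]

lemma low_of_sigmaMin {m n : ℕ} {A : Matrix (Fin m) (Fin n) ℝ} {s : ℝ}
    (hmin : s ≤ sigmaMin A) : ∀ v, s * evnorm v ≤ evnorm (A *ᵥ v) := by
  intro v
  rcases eq_or_ne v 0 with rfl | hv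
  · simp [evnorm, Matrix.mulVec_zero]
  · have hc : 0 < evnorm v :=
      (evnorm_nonneg v).lt_of_ne fun h => hv (evnorm_eq_zero h.symm)
    have hunit : evnorm ((evnorm v)⁻¹ • v) = 1 := by
      rw [evnorm_smul, abs_of_pos (inv_pos.mpr hc), inv_mul_cancel₀ hc.ne']
    have h := hmin.trans (sigmaMin_le_apply' A hunit)
    rw [Matrix.mulVec_smul, evnorm_smul, abs_of_pos (inv_pos.mpr hc)] at h
    calc s * evnorm v ≤ ((evnorm v)⁻¹ * evnorm (A *ᵥ v)) * evnorm v :=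
          mul_le_mul_of_nonneg_right h hc.le
      _ = evnorm (A *ᵥ v) := by field_simp

lemma exists_unit_vec {n : ℕ} (hn : 0 < n) : ∃ v : Fin n → ℝ, evnorm v = 1 := by
  refine ⟨Pi.single ⟨0, hn⟩ 1, ?_⟩
  unfold evnorm
  have h : ∑ i, (Pi.single ⟨0, hn⟩ 1 : Fin n → ℝ) i ^ 2 = 1 := by
    rw [Finset.sum_eq_single (⟨0, hn⟩ : Fin n)]
    · simp
    · intro b _ hb; simp [Pi.single_apply, hb]
    · intro h; exact absurd (Finset.mem_univ _) h
  rw [h, Real.sqrt_one]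

theorem stmt16 {D d : ℕ} (s R : ℝ) (hs : 0 < s) (X Y : Matrix (Fin D) (Fin d) ℝ)
    (hXmin : s ≤ sigmaMin X) (hYmin : s ≤ sigmaMin Y)
    (hXmax : sigmaMax X ≤ R) (hYmax : sigmaMax Y ≤ R) :
    frob ((Xᵀ * X)⁻¹ * Xᵀ - (Yᵀ * Y)⁻¹ * Yᵀ) ≤
      (1 / s ^ 2 + Real.sqrt 2 * R ^ 2 / s ^ 4) * frob (X - Y) ∧
    sigmaMax ((Xᵀ * X)⁻¹ * Xᵀ) ≤ 1 / s := by
  rcases Nat.eq_zero_or_pos d with hd | hd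
  · exfalso
    subst hd
    have hempty : {r : ℝ | ∃ v : Fin 0 → ℝ, evnorm v = 1 ∧ r = evnorm (X.mulVec v)} = ∅ := by
      ext r
      simp only [Set.mem_setOf_eq, Set.mem_empty_iff_false, iff_false, not_exists]
      rintro v ⟨hv, -⟩
      unfold evnorm at hv
      simp at hv
    have : sigmaMin X = 0 := by unfold sigmaMin; rw [hempty, Real.sInf_empty]
    rw [this] at hXmin; linarith
  obtain ⟨u0, hu0⟩ := exists_unit_vec (n := d) hd
  have hsR : s ≤ R :=
    hXmin.trans ((sigmaMin_le_apply' X hu0).trans ((apply_le_sigmaMax X hu0).trans hXmax))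
  have hXlow := low_of_sigmaMin hXmin
  have hYlow := low_of_sigmaMin hYmin
  have hXdet := gram_isUnit hs hXlow
  have hYdet := gram_isUnit hs hYlow
  constructor
  · set F := frob (X - Y) with hF
    have hF0 : 0 ≤ F := frob_nonneg _
    have hid := pinv_diff_identity X Y hXdet hYdet
    have hYpT : ((Yᵀ * Y)⁻¹ * Yᵀ)ᵀ = Y * (Yᵀ * Y)⁻¹ := by
      rw [Matrix.transpose_mul, Matrix.transpose_transpose, Matrix.transpose_nonsing_inv,
        Matrix.transpose_mul, Matrix.transpose_transpose]
    have hT1 : frob (((Xᵀ * X)⁻¹ * Xᵀ) * (X - Y) * ((Yᵀ * Y)⁻¹ * Yᵀ)) ≤ 1 / s * (1 / s * F) := by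
      calc frob (((Xᵀ * X)⁻¹ * Xᵀ) * (X - Y) * ((Yᵀ * Y)⁻¹ * Yᵀ))
          ≤ 1 / s * frob (((Xᵀ * X)⁻¹ * Xᵀ) * (X - Y)) := by
            refine frob_mul_right _ _ (by positivity) fun v => ?_
            rw [hYpT]; exact pinvT_bound hs hYlow v
        _ ≤ 1 / s * (1 / s * F) := by
            refine mul_le_mul_of_nonneg_left ?_ (by positivity)
            exact frob_mul_left _ _ (by positivity) (pinv_bound hs hXlow)
    have hQT : (1 - Y * (Yᵀ * Y)⁻¹ * Yᵀ)ᵀ = 1 - Y * (Yᵀ * Y)⁻¹ * Yᵀ := by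
      rw [Matrix.transpose_sub, Matrix.transpose_one, proj_symm_s16 hYdet]
    have hT2 : frob (((Xᵀ * X)⁻¹ * (X - Y)ᵀ) * (1 - Y * (Yᵀ * Y)⁻¹ * Yᵀ)) ≤ 1 / s ^ 2 * F := by
      calc frob (((Xᵀ * X)⁻¹ * (X - Y)ᵀ) * (1 - Y * (Yᵀ * Y)⁻¹ * Yᵀ))
          ≤ 1 * frob ((Xᵀ * X)⁻¹ * (X - Y)ᵀ) := by
            refine frob_mul_right _ _ zero_le_one fun v => ?_
            rw [hQT, one_mul]; exact proj_contract hYdet v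
        _ = frob ((Xᵀ * X)⁻¹ * (X - Y)ᵀ) := one_mul _
        _ ≤ 1 / s ^ 2 * frob (X - Y)ᵀ :=
            frob_mul_left _ _ (by positivity) (graminv_bound hs hXlow)
        _ = 1 / s ^ 2 * F := by rw [frob_transpose]
    have hmain : frob ((Xᵀ * X)⁻¹ * Xᵀ - (Yᵀ * Y)⁻¹ * Yᵀ) ≤ 1 / s * (1 / s * F) + 1 / s ^ 2 * F := by
      rw [hid]
      calc frob (-(((Xᵀ * X)⁻¹ * Xᵀ) * (X - Y) * ((Yᵀ * Y)⁻¹ * Yᵀ)) +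
              ((Xᵀ * X)⁻¹ * (X - Y)ᵀ) * (1 - Y * (Yᵀ * Y)⁻¹ * Yᵀ))
          ≤ frob (-(((Xᵀ * X)⁻¹ * Xᵀ) * (X - Y) * ((Yᵀ * Y)⁻¹ * Yᵀ))) +
            frob (((Xᵀ * X)⁻¹ * (X - Y)ᵀ) * (1 - Y * (Yᵀ * Y)⁻¹ * Yᵀ)) := frob_add_le _ _
        _ ≤ 1 / s * (1 / s * F) + 1 / s ^ 2 * F := by
            rw [frob_neg]; exact add_le_add hT1 hT2
    have hsqrt2 : (1:ℝ) ≤ Real.sqrt 2 := by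
      rw [show (1:ℝ) = Real.sqrt 1 by rw [Real.sqrt_one]]
      exact Real.sqrt_le_sqrt one_le_two
    have hcoef : 1 / s * (1 / s) ≤ Real.sqrt 2 * R ^ 2 / s ^ 4 := by
      rw [div_mul_div_comm, one_mul, div_le_div_iff₀ (by positivity) (by positivity)]
      have h1 : s ^ 2 ≤ R ^ 2 := by nlinarith
      nlinarith [mul_le_mul_of_nonneg_right h1 (sq_nonneg s),
        mul_le_mul_of_nonneg_right hsqrt2 (mul_nonneg (sq_nonneg R) (sq_nonneg s))]
    calc frob ((Xᵀ * X)⁻¹ * Xᵀ - (Yᵀ * Y)⁻¹ * Yᵀ) ≤ 1 / s * (1 / s * F) + 1 / s ^ 2 * F := hmain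
      _ = (1 / s * (1 / s)) * F + 1 / s ^ 2 * F := by ring
      _ ≤ (Real.sqrt 2 * R ^ 2 / s ^ 4) * F + 1 / s ^ 2 * F :=
          add_le_add (mul_le_mul_of_nonneg_right hcoef hF0) le_rfl
      _ = (1 / s ^ 2 + Real.sqrt 2 * R ^ 2 / s ^ 4) * F := by ring
  · refine Real.sSup_le ?_ (by positivity)
    rintro r ⟨v, hv, rfl⟩
    have := pinv_bound hs hXlow v
    rw [hv, mul_one] at this
    exact this
end
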